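/- arXiv:2410.02059 — 3 statements merged into one kernel-verified Lean document; each statement's English description precedes it below -/
import Mathlib

section
/- Let H be a complex Hilbert space and let W₀, W₁, W₂ be unitary operators on H such that the Wₐ pairwise satisfy Wₐ W_{a+1} = θₐ W_{a+1} Wₐ for scalars θₐ (indices mod 3), and such that each Wₐ commutes with the product P = W₀ W₁ W₂. Then θ₀ = θ₁ = θ₂. -/
/-- Three unitaries pairwise commuting up to scalars, each commuting with their product,
have equal commutation scalars. -/
theorem stmt0 {H : Type*} [NormedAddCommGroup H] [InnerProductSpace ℂ H] [CompleteSpace H]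
    [Nontrivial H]
    (W₀ W₁ W₂ : H →L[ℂ] H)
    (hW₀ : W₀ ∈ unitary (H →L[ℂ] H)) (hW₁ : W₁ ∈ unitary (H →L[ℂ] H))
    (hW₂ : W₂ ∈ unitary (H →L[ℂ] H))
    (θ₀ θ₁ θ₂ : ℂ)
    (hθ₀ : ‖θ₀‖ = 1) (hθ₁ : ‖θ₁‖ = 1) (hθ₂ : ‖θ₂‖ = 1)
    (h01 : W₀ * W₁ = θ₀ • (W₁ * W₀))
    (h12 : W₁ * W₂ = θ₁ • (W₂ * W₁))
    (h20 : W₂ * W₀ = θ₂ • (W₀ * W₂))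
    (hP₀ : Commute (W₀ * W₁ * W₂) W₀)
    (hP₁ : Commute (W₀ * W₁ * W₂) W₁)
    (hP₂ : Commute (W₀ * W₁ * W₂) W₂) :
    θ₀ = θ₁ ∧ θ₁ = θ₂ := by
  have hu₀ : IsUnit W₀ := ⟨Unitary.toUnits ⟨W₀, hW₀⟩, rfl⟩
  have hu₁ : IsUnit W₁ := ⟨Unitary.toUnits ⟨W₁, hW₁⟩, rfl⟩
  have hu₂ : IsUnit W₂ := ⟨Unitary.toUnits ⟨W₂, hW₂⟩, rfl⟩
  have hnt : Nontrivial (H →L[ℂ] H) := by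
    obtain ⟨x, hx⟩ := exists_ne (0 : H)
    refine ⟨1, 0, fun h => hx ?_⟩
    have := congrArg (fun f : H →L[ℂ] H => f x) h
    simpa using this
  have key : ∀ (a b : ℂ) (Z : H →L[ℂ] H), IsUnit Z → a • Z = b • Z → a = b := by
    intro a b Z hZ h
    have h0 : (a - b) • Z = 0 := by rw [sub_smul, h, sub_self]
    rcases smul_eq_zero.mp h0 with h | h
    · exact sub_eq_zero.mp h
    · exact absurd h hZ.ne_zero
  have e01 : θ₁ = θ₀ := by
    have h : W₀ * W₁ * W₂ * W₁ = W₁ * (W₀ * W₁ * W₂) := hP₁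
    have l : θ₁ • (W₀ * W₁ * W₂ * W₁) = W₀ * (W₁ * (W₁ * W₂)) := by
      have e : W₀ * W₁ * W₂ * W₁ = W₀ * (W₁ * (W₂ * W₁)) := by simp [mul_assoc]
      rw [e, h12]
      simp [mul_smul_comm]
    have r : θ₀ • (W₁ * (W₀ * W₁ * W₂)) = W₀ * (W₁ * (W₁ * W₂)) := by
      have e : W₁ * (W₀ * W₁ * W₂) = W₁ * W₀ * (W₁ * W₂) := by simp [mul_assoc]
      have e2 : W₀ * (W₁ * (W₁ * W₂)) = W₀ * W₁ * (W₁ * W₂) := by simp [mul_assoc]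
      rw [e, e2, h01, smul_mul_assoc]
    refine key θ₁ θ₀ _ (((hu₀.mul hu₁).mul hu₂).mul hu₁) ?_
    rw [l, h, r]
  have e02 : θ₂ = θ₀ := by
    have h : W₀ * W₁ * W₂ * W₀ = W₀ * (W₀ * W₁ * W₂) := hP₀
    have l : θ₀ • (W₀ * W₁ * W₂ * W₀) = θ₂ • (W₀ * (W₀ * (W₁ * W₂))) := by
      have e : W₀ * W₁ * W₂ * W₀ = W₀ * (W₁ * (W₂ * W₀)) := by simp [mul_assoc]
      have e2 : W₀ * (W₀ * (W₁ * W₂)) = W₀ * (W₀ * W₁ * W₂) := by simp [mul_assoc]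
      rw [e, h20, e2]
      conv_rhs => rw [h01]
      simp only [mul_smul_comm, smul_mul_assoc, smul_smul, mul_assoc]
      rw [mul_comm θ₀ θ₂]
    rw [h] at l
    have e : W₀ * (W₀ * W₁ * W₂) = W₀ * (W₀ * (W₁ * W₂)) := by simp [mul_assoc]
    rw [e] at l
    exact (key θ₀ θ₂ _ (hu₀.mul (hu₀.mul (hu₁.mul hu₂))) l).symm
  exact ⟨e01.symm, e01.trans e02.symm⟩
end

section
/- Let W₀, W₁, Θ, U₀₁, U₁₂, U₂₀ be unitaries on a complex Hilbert space such that: Θ² = 1; each Wₐ commutes with Θ; W₀W₁ = θ W₁W₀ for a unimodular scalar θ; there is ε ∈ {0,1} with Θ Uₐ Θ = (−1)^ε Uₐ for all three U's; the U's pairwise commute when ε = 0 and pairwise anticommute when ε = 1; W₀² = λ₀ U₂₀⁻¹U₀₁ and W₁² = λ₁ U₀₁⁻¹U₁₂ for unimodular scalars λ₀, λ₁; W₀ U₀₁ W₀⁻¹ = ω U₀₁ and U₀₁ W₁ U₀₁⁻¹ = θ² W₁ for unimodular ω with θ² = ω. Then θ⁸ = 1. -/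
/-- The eighth-power triviality `θ⁸ = 1` of the exchange phase of fermionic parity fluxes. -/
theorem stmt2 {H : Type*} [NormedAddCommGroup H] [InnerProductSpace ℂ H] [CompleteSpace H]
    [Nontrivial H]
    (W₀ W₁ Θ U₀₁ U₁₂ U₂₀ : H →L[ℂ] H)
    (hW₀ : W₀ ∈ unitary (H →L[ℂ] H)) (hW₁ : W₁ ∈ unitary (H →L[ℂ] H))
    (hΘ : Θ ∈ unitary (H →L[ℂ] H))
    (hU₀₁ : U₀₁ ∈ unitary (H →L[ℂ] H)) (hU₁₂ : U₁₂ ∈ unitary (H →L[ℂ] H))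
    (hU₂₀ : U₂₀ ∈ unitary (H →L[ℂ] H))
    (hΘ2 : Θ * Θ = 1)
    (hΘW₀ : Θ * W₀ = W₀ * Θ) (hΘW₁ : Θ * W₁ = W₁ * Θ)
    (θ : ℂ) (hθabs : ‖θ‖ = 1)
    (hWW : W₀ * W₁ = θ • (W₁ * W₀))
    (ε : ℕ) (hε : ε = 0 ∨ ε = 1)
    (hΘU₀₁ : Θ * U₀₁ * Θ = ((-1 : ℂ) ^ ε) • U₀₁)
    (hΘU₁₂ : Θ * U₁₂ * Θ = ((-1 : ℂ) ^ ε) • U₁₂)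
    (hΘU₂₀ : Θ * U₂₀ * Θ = ((-1 : ℂ) ^ ε) • U₂₀)
    (hU01U12 : U₀₁ * U₁₂ = ((-1 : ℂ) ^ ε) • (U₁₂ * U₀₁))
    (hU12U20 : U₁₂ * U₂₀ = ((-1 : ℂ) ^ ε) • (U₂₀ * U₁₂))
    (hU20U01 : U₂₀ * U₀₁ = ((-1 : ℂ) ^ ε) • (U₀₁ * U₂₀))
    (lam₀ lam₁ : ℂ) (hlam₀ : ‖lam₀‖ = 1) (hlam₁ : ‖lam₁‖ = 1)
    (hW₀sq : W₀ * W₀ = lam₀ • (star U₂₀ * U₀₁))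
    (hW₁sq : W₁ * W₁ = lam₁ • (star U₀₁ * U₁₂))
    (ω : ℂ) (hωabs : ‖ω‖ = 1)
    (hconj : W₀ * U₀₁ = ω • (U₀₁ * W₀))
    (hconj' : U₀₁ * W₁ = (θ ^ 2) • (W₁ * U₀₁))
    (hθω : θ ^ 2 = ω) :
    θ ^ 8 = 1 := by
  set c : ℂ := (-1 : ℂ) ^ ε with hc
  have hc2 : c * c = 1 := by rcases hε with h | h <;> simp [hc, h]
  have hU20s : star U₂₀ * U₂₀ = 1 := Unitary.star_mul_self_of_mem hU₂₀
  have hU20s' : U₂₀ * star U₂₀ = 1 := Unitary.mul_star_self_of_mem hU₂₀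
  -- commutation of star U₂₀ with U₀₁
  have h1 : U₀₁ * star U₂₀ = c • (star U₂₀ * U₀₁) := by
    have := congrArg (fun x => star U₂₀ * x * star U₂₀) hU20U01
    simp only [mul_smul_comm, smul_mul_assoc] at this
    calc U₀₁ * star U₂₀ = star U₂₀ * U₂₀ * U₀₁ * star U₂₀ := by rw [hU20s, one_mul]
      _ = star U₂₀ * (U₂₀ * U₀₁) * star U₂₀ := by rw [mul_assoc (star U₂₀)]
      _ = c • (star U₂₀ * (U₀₁ * U₂₀) * star U₂₀) := this
      _ = c • (star U₂₀ * U₀₁ * (U₂₀ * star U₂₀)) := by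
            rw [mul_assoc, mul_assoc, mul_assoc]
      _ = c • (star U₂₀ * U₀₁) := by rw [hU20s', mul_one]
  have h2 : star U₂₀ * U₀₁ = c • (U₀₁ * star U₂₀) := by
    have := congrArg (fun x => c • x) h1
    simpa [smul_smul, hc2] using this.symm
  -- two computations of (W₀*W₀)*U₀₁
  have e1 : W₀ * W₀ * U₀₁ = (ω * ω) • (U₀₁ * (W₀ * W₀)) := by
    rw [mul_assoc, hconj, mul_smul_comm, ← mul_assoc, hconj, smul_mul_assoc,
      smul_smul, mul_assoc]
  have e2 : W₀ * W₀ * U₀₁ = c • (U₀₁ * (W₀ * W₀)) := by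
    calc W₀ * W₀ * U₀₁ = lam₀ • (star U₂₀ * U₀₁ * U₀₁) := by
            rw [hW₀sq, smul_mul_assoc]
      _ = lam₀ • ((c • (U₀₁ * star U₂₀)) * U₀₁) := by rw [h2]
      _ = c • (U₀₁ * (lam₀ • (star U₂₀ * U₀₁))) := by
            rw [smul_mul_assoc, smul_comm, mul_assoc, mul_smul_comm]
      _ = c • (U₀₁ * (W₀ * W₀)) := by rw [← hW₀sq]
  have hA : (U₀₁ * (W₀ * W₀)) * star (U₀₁ * (W₀ * W₀)) = 1 :=
    Unitary.mul_star_self_of_mem (mul_mem hU₀₁ (mul_mem hW₀ hW₀))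
  have hωc : ω * ω = c := by
    have h3 : (ω * ω - c) • (U₀₁ * (W₀ * W₀)) = 0 := by
      rw [sub_smul, ← e1, ← e2, sub_self]
    have h4 := congrArg (fun x => x * star (U₀₁ * (W₀ * W₀))) h3
    simp only [smul_mul_assoc, zero_mul, hA, smul_eq_zero] at h4
    rcases h4 with h | h
    · exact sub_eq_zero.mp h
    · exact absurd h one_ne_zero
  have : θ ^ 8 = (ω * ω) * (ω * ω) := by rw [← hθω]; ring
  rw [this, hωc, hc2]
end

section
/- Let G be a group and H a complex Hilbert space. Suppose for each g ∈ G we are given a unitary W(g) on H, and for each pair g₁,g₂ a unitary U(g₁,g₂) such that U(g₁,g₂)·U(g₁g₂,g₃) = ω(g₁,g₂,g₃)·(W(g₁)U(g₂,g₃)W(g₁)⁻¹)·U(g₁,g₂g₃) for scalars ω(g₁,g₂,g₃) of modulus 1, and suppose conjugation by W(g₁) of any U(g₂,g₃) again yields an operator of the same 'type' so that the pentagon of reassociations closes. Then ω satisfies the 3-cocycle identity: ω(g₂,g₃,g₄)·ω(g₁,g₂g₃,g₄)·ω(g₁,g₂,g₃) = ω(g₁g₂,g₃,g₄)·ω(g₁,g₂,g₃g₄),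 provided W(g)U(h,k)W(g)⁻¹ commutes with scalar factors and the assignment g ↦ Ad_{W(g)} is a homomorphism up to conjugation by the U's (i.e. W(g₁)W(g₂) = λ(g₁,g₂)·V(g₁,g₂)W(g₁g₂) with V(g₁,g₂) built from U's that intertwine appropriately). -/
private lemma smul_unit_cancel {A : Type*} [Ring A] [Algebra ℂ A] [Nontrivial A]
    (a b : ℂ) (x : Aˣ) (h : a • (x : A) = b • (x : A)) : a = b := by
  have h2 : a • (1 : A) = b • (1 : A) := by
    have := congrArg (fun t : A => t * ((x⁻¹ : Aˣ) : A)) h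
    simpa [smul_mul_assoc, Units.mul_inv] using this
  have h3 : algebraMap ℂ A a = algebraMap ℂ A b := by
    simpa [Algebra.algebraMap_eq_smul_one] using h2
  exact (algebraMap ℂ A).injective h3

/-- If `W(g₁)W(g₂) = U(g₁,g₂)W(g₁g₂)` and
`U(g₁,g₂)U(g₁g₂,g₃) = ω(g₁,g₂,g₃)·(W(g₁)U(g₂,g₃)W(g₁)⁻¹)·U(g₁,g₂g₃)` for unimodular
scalars `ω`, then `ω` satisfies the 3-cocycle identity. -/
theorem stmt16 {G A : Type*} [Group G] [Ring A] [Algebra ℂ A] [Nontrivial A]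
    (W : G → Aˣ) (U : G → G → Aˣ) (ω : G → G → G → ℂ)
    (hω : ∀ g₁ g₂ g₃, ‖ω g₁ g₂ g₃‖ = 1)
    (hmul : ∀ g₁ g₂, (W g₁ : A) * (W g₂ : A) = (U g₁ g₂ : A) * (W (g₁ * g₂) : A))
    (hrel : ∀ g₁ g₂ g₃, (U g₁ g₂ : A) * (U (g₁ * g₂) g₃ : A) =
      ω g₁ g₂ g₃ •
        ((W g₁ : A) * (U g₂ g₃ : A) * ((W g₁)⁻¹ : Aˣ) * (U g₁ (g₂ * g₃) : A))) :
    ∀ g₁ g₂ g₃ g₄ : G,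
      ω g₂ g₃ g₄ * ω g₁ (g₂ * g₃) g₄ * ω g₁ g₂ g₃ =
        ω (g₁ * g₂) g₃ g₄ * ω g₁ g₂ (g₃ * g₄) := by
  intro g₁ g₂ g₃ g₄
  have ic1 : ∀ (u : Aˣ) (x : A), (u : A) * (((u⁻¹ : Aˣ) : A) * x) = x := by
    intro u x; rw [← mul_assoc, Units.mul_inv, one_mul]
  have ic2 : ∀ (u : Aˣ) (x : A), ((u⁻¹ : Aˣ) : A) * ((u : A) * x) = x := by
    intro u x; rw [← mul_assoc, Units.inv_mul, one_mul]
  set c : G → A → A := fun g a => (W g : A) * a * ((W g)⁻¹ : Aˣ) with hc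
  clear_value c
  have c_mul : ∀ g (a b : A), c g (a * b) = c g a * c g b := by
    intro g a b
    simp only [hc, mul_assoc, ic1, ic2]
  have c_smul : ∀ g (s : ℂ) (a : A), c g (s • a) = s • c g a := by
    intro g s a
    simp only [hc, mul_smul_comm, smul_mul_assoc]
  have hrel' : ∀ a b d : G, (U a b : A) * (U (a * b) d : A) =
      ω a b d • (c a (U b d) * (U a (b * d) : A)) := by
    intro a b d
    simp only [hc]
    exact hrel a b d
  have hcc : ∀ (a b : G) (x : A),
      (U a b : A) * c (a * b) x = c a (c b x) * (U a b : A) := by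
    intro a b x
    have hW : (U a b : A) * (W (a * b) : A) = (W a : A) * (W b : A) := (hmul a b).symm
    have hcancel : ∀ y z : A, y * (W (a * b) : A) = z * (W (a * b) : A) → y = z := by
      intro y z hyz
      have := congrArg (fun t : A => t * (((W (a * b))⁻¹ : Aˣ) : A)) hyz
      simpa [mul_assoc, Units.mul_inv] using this
    apply hcancel
    have e1 : (U a b : A) * c (a * b) x * (W (a * b) : A)
        = (W a : A) * ((W b : A) * x) := by
      simp only [hc, mul_assoc]
      rw [← mul_assoc ((U a b : A)) ((W (a*b) : A)), hW]
      simp only [mul_assoc, ic1, ic2, Units.inv_mul, mul_one]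
    have e2 : c a (c b x) * (U a b : A) * (W (a * b) : A)
        = (W a : A) * ((W b : A) * x) := by
      simp only [hc, mul_assoc]
      rw [show ((U a b : A) * (W (a*b) : A)) = (W a : A) * (W b : A) from hW]
      simp only [mul_assoc, ic1, ic2, Units.inv_mul, mul_one]
    rw [e1, e2]
  set P : A := (U g₁ g₂ : A) * (U (g₁*g₂) g₃ : A) * (U (g₁*g₂*g₃) g₄ : A) with hP
  set E : A := c g₁ (c g₂ (U g₃ g₄)) * (c g₁ (U g₂ (g₃*g₄)) *
      (U g₁ (g₂*g₃*g₄) : A)) with hE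
  have wayA : P = (ω g₂ g₃ g₄ * ω g₁ (g₂ * g₃) g₄ * ω g₁ g₂ g₃) • E := by
    calc P = (ω g₁ g₂ g₃ • (c g₁ (U g₂ g₃) * (U g₁ (g₂*g₃) : A))) *
            (U (g₁*(g₂*g₃)) g₄ : A) := by
          rw [hP, hrel' g₁ g₂ g₃, mul_assoc g₁ g₂ g₃]
      _ = ω g₁ g₂ g₃ • (c g₁ (U g₂ g₃) *
            ((U g₁ (g₂*g₃) : A) * (U (g₁*(g₂*g₃)) g₄ : A))) := by
          rw [smul_mul_assoc, mul_assoc]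
      _ = (ω g₁ g₂ g₃ * ω g₁ (g₂*g₃) g₄) • (c g₁ (U g₂ g₃) *
            (c g₁ (U (g₂*g₃) g₄) * (U g₁ (g₂*g₃*g₄) : A))) := by
          rw [hrel' g₁ (g₂*g₃) g₄, mul_smul_comm, smul_smul]
      _ = (ω g₁ g₂ g₃ * ω g₁ (g₂*g₃) g₄) •
            (c g₁ ((U g₂ g₃ : A) * (U (g₂*g₃) g₄ : A)) * (U g₁ (g₂*g₃*g₄) : A)) := by
          rw [c_mul, mul_assoc (c g₁ (U g₂ g₃)) (c g₁ (U (g₂*g₃) g₄))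
            ((U g₁ (g₂*g₃*g₄) : A))]
      _ = (ω g₁ g₂ g₃ * ω g₁ (g₂*g₃) g₄ * ω g₂ g₃ g₄) •
            (c g₁ (c g₂ (U g₃ g₄) * (U g₂ (g₃*g₄) : A)) * (U g₁ (g₂*g₃*g₄) : A)) := by
          rw [hrel' g₂ g₃ g₄, c_smul, smul_mul_assoc, smul_smul]
      _ = (ω g₂ g₃ g₄ * ω g₁ (g₂ * g₃) g₄ * ω g₁ g₂ g₃) • E := by
          rw [hE, c_mul, mul_assoc (c g₁ (c g₂ (U g₃ g₄))) (c g₁ (U g₂ (g₃*g₄)))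
              ((U g₁ (g₂*g₃*g₄) : A)),
            show ω g₁ g₂ g₃ * ω g₁ (g₂*g₃) g₄ * ω g₂ g₃ g₄ =
              ω g₂ g₃ g₄ * ω g₁ (g₂ * g₃) g₄ * ω g₁ g₂ g₃ from by ring]
  have wayB : P = (ω (g₁ * g₂) g₃ g₄ * ω g₁ g₂ (g₃ * g₄)) • E := by
    calc P = (U g₁ g₂ : A) * ((U (g₁*g₂) g₃ : A) * (U ((g₁*g₂)*g₃) g₄ : A)) := by
          rw [hP, mul_assoc]
      _ = ω (g₁*g₂) g₃ g₄ • (((U g₁ g₂ : A) * c (g₁*g₂) (U g₃ g₄)) *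
            (U (g₁*g₂) (g₃*g₄) : A)) := by
          rw [hrel' (g₁*g₂) g₃ g₄, mul_smul_comm, ← mul_assoc]
      _ = ω (g₁*g₂) g₃ g₄ • (c g₁ (c g₂ (U g₃ g₄)) *
            ((U g₁ g₂ : A) * (U (g₁*g₂) (g₃*g₄) : A))) := by
          rw [hcc g₁ g₂, mul_assoc]
      _ = (ω (g₁*g₂) g₃ g₄ * ω g₁ g₂ (g₃*g₄)) • (c g₁ (c g₂ (U g₃ g₄)) *
            (c g₁ (U g₂ (g₃*g₄)) * (U g₁ (g₂*(g₃*g₄)) : A))) := by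
          rw [hrel' g₁ g₂ (g₃*g₄), mul_smul_comm, smul_smul]
      _ = (ω (g₁ * g₂) g₃ g₄ * ω g₁ g₂ (g₃ * g₄)) • E := by
          rw [hE, mul_assoc g₂ g₃ g₄]
  have hEunit : ∃ e : Aˣ, (e : A) = E := by
    refine ⟨(W g₁ * (W g₂ * U g₃ g₄ * (W g₂)⁻¹) * (W g₁)⁻¹) *
      ((W g₁ * U g₂ (g₃*g₄) * (W g₁)⁻¹) * U g₁ (g₂*g₃*g₄)), ?_⟩
    simp only [hE, hc, Units.val_mul, mul_assoc]
  obtain ⟨e, he⟩ := hEunit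
  apply smul_unit_cancel _ _ e
  rw [he, ← wayA, ← wayB]
end
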